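/- Let A be an n×n complex block matrix with A11 invertible, B = ppt(A), and let λ be a nonzero complex number. Then λ is an eigenvalue of B if and only if the matrix A − D is singular, where D is the diagonal matrix whose diagonal entries are λ⁻¹ on the indices of the pivot block and λ on the remaining indices. -/

import Mathlib

private theorem fromBlocks_sub' {n m o p : Type*} {α : Type*} [Sub α]
    (A : Matrix n m α) (B : Matrix n o α) (C : Matrix p m α) (D : Matrix p o α)
    (A' : Matrix n m α) (B' : Matrix n o α) (C' : Matrix p m α) (D' : Matrix p o α) :
    Matrix.fromBlocks A B C D - Matrix.fromBlocks A' B' C' D' =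
      Matrix.fromBlocks (A - A') (B - B') (C - C') (D - D') := by
  ext (i | i) (j | j) <;> rfl

/-- a nonzero `λ` is an eigenvalue of `B = ppt(A)` iff `A - D` is
singular, where `D = diag(λ⁻¹ I_k, λ I_{n-k})`. -/
theorem stmt_7 {k l : Type*} [Fintype k] [Fintype l] [DecidableEq k] [DecidableEq l]
    (A11 : Matrix k k ℂ) (A12 : Matrix k l ℂ) (A21 : Matrix l k ℂ) (A22 : Matrix l l ℂ)
    (h : IsUnit A11.det) (lam : ℂ) (hlam : lam ≠ 0) :
    (∃ v : (k ⊕ l) → ℂ, v ≠ 0 ∧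
        (Matrix.fromBlocks A11⁻¹ (-(A11⁻¹ * A12)) (A21 * A11⁻¹)
            (A22 - A21 * A11⁻¹ * A12)).mulVec v = lam • v) ↔
    (Matrix.fromBlocks A11 A12 A21 A22 -
        Matrix.fromBlocks (lam⁻¹ • (1 : Matrix k k ℂ)) 0 0
          (lam • (1 : Matrix l l ℂ))).det = 0 := by
  set B := Matrix.fromBlocks A11⁻¹ (-(A11⁻¹ * A12)) (A21 * A11⁻¹)
      (A22 - A21 * A11⁻¹ * A12) with hB
  set M := Matrix.fromBlocks A11 A12 A21 A22 -
      Matrix.fromBlocks (lam⁻¹ • (1 : Matrix k k ℂ)) 0 0 (lam • (1 : Matrix l l ℂ)) with hM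
  have hA : A11 * A11⁻¹ = 1 := Matrix.mul_nonsing_inv _ h
  -- Step 1: eigenvalue condition ↔ det (B - lam • 1) = 0
  have eig : (∃ v : (k ⊕ l) → ℂ, v ≠ 0 ∧ B.mulVec v = lam • v) ↔
      (B - lam • 1).det = 0 := by
    rw [← Matrix.exists_mulVec_eq_zero_iff]
    constructor
    · rintro ⟨v, hv, hBv⟩
      exact ⟨v, hv, by
        rw [Matrix.sub_mulVec, hBv, Matrix.smul_mulVec, Matrix.one_mulVec, sub_self]⟩
    · rintro ⟨v, hv, hBv⟩
      refine ⟨v, hv, ?_⟩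
      rwa [Matrix.sub_mulVec, Matrix.smul_mulVec, Matrix.one_mulVec, sub_eq_zero] at hBv
  rw [eig]
  -- Step 2: the matrix identity
  have key : M * Matrix.fromBlocks (lam • (1 : Matrix k k ℂ)) 0 0 (1 : Matrix l l ℂ)
      = Matrix.fromBlocks (-A11) 0 (-A21) (1 : Matrix l l ℂ) * (B - lam • 1) := by
    have h1 : (lam • (1 : Matrix (k ⊕ l) (k ⊕ l) ℂ)) =
        Matrix.fromBlocks (lam • 1) 0 0 (lam • 1) := by
      rw [← Matrix.fromBlocks_one, Matrix.fromBlocks_smul, smul_zero, smul_zero]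
    rw [hM, hB, h1, fromBlocks_sub', fromBlocks_sub',
      Matrix.fromBlocks_multiply, Matrix.fromBlocks_multiply]
    refine Matrix.fromBlocks_inj.mpr ⟨?_, ?_, ?_, ?_⟩ <;>
      simp only [Matrix.mul_zero, Matrix.zero_mul, Matrix.mul_one, Matrix.one_mul,
        add_zero, zero_add, sub_zero, zero_sub, Matrix.mul_smul, Matrix.smul_mul,
        Matrix.mul_sub, Matrix.sub_mul, Matrix.mul_neg, Matrix.neg_mul,
        smul_smul, inv_mul_cancel₀ hlam, one_smul, ← Matrix.mul_assoc, hA,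
        neg_neg, sub_neg_eq_add] <;>
      match_scalars <;> field_simp <;> ring
  -- Step 3: take determinants
  have hdet := congrArg Matrix.det key
  rw [Matrix.det_mul, Matrix.det_mul, Matrix.det_fromBlocks_zero₁₂,
    Matrix.det_fromBlocks_zero₁₂, Matrix.det_one, Matrix.det_smul, Matrix.det_one,
    mul_one, mul_one, mul_one] at hdet
  have hlk : lam ^ Fintype.card k ≠ 0 := pow_ne_zero _ hlam
  have hnA : (-A11).det ≠ 0 := by
    rw [Matrix.det_neg]
    exact mul_ne_zero (pow_ne_zero _ (by norm_num)) h.ne_zero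
  constructor
  · intro h0
    rw [h0, mul_zero] at hdet
    rcases mul_eq_zero.mp hdet with h1 | h1
    · exact h1
    · exact absurd h1 hlk
  · intro h0
    rw [h0, zero_mul] at hdet
    rcases mul_eq_zero.mp hdet.symm with h1 | h1
    · exact absurd h1 hnA
    · exact h1
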